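/- arXiv:1611.07144 — 3 statements merged into one kernel-verified Lean document; each statement's English description precedes it below -/
import Mathlib

section
/- Let p be an odd prime, S a power of 2 with 2S dividing p − 1, and η ∈ 𝔽_p a primitive 2S-th root of unity; set ω = η². Then for any f = Σ_{i=0}^{S−1} a_i X^i ∈ 𝔽_p[X], the DFT values satisfy f(ω^i) = η^{i²} · h_i for each 0 ≤ i < S, where h = (Σ_i η^{i²} a_i X^i) · (Σ_i η^{−i²} X^i) computed in 𝔽_p[X]/(X^S − 1) and h_i is the coefficient of X^i in h. -/
private lemma blu_key (S : ℕ) (hS : 2 ∣ S) (x y : ℤ) (h : (S:ℤ) ∣ x - y) :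
    (2*S : ℤ) ∣ x^2 - y^2 := by
  obtain ⟨m, hm⟩ := h
  obtain ⟨t, ht⟩ := hS
  have h1 : x ^ 2 - y ^ 2 = (x - y) * (x + y) := by ring
  rw [h1, hm]
  have h2 : x + y = m * S + 2 * y := by linarith
  rw [h2]
  have h3 : S * m * (m * S + 2 * y) = (2 * S) * (m^2 * t + m * y) := by
    push_cast [ht]; ring
  rw [h3]
  exact Dvd.intro _ rfl


/-- Bluestein's trick: Let `p` be an odd prime, `S = 2^s` with `2S ∣ p - 1`,
and `η ∈ 𝔽_p^×` a primitive `2S`-th root of unity; set `ω = η²`.  For any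
`f = Σ_{j<S} a_j X^j`, the DFT values satisfy `f(ω^i) = η^{i²} · h_i`, where `h_i` is the
`i`-th coefficient of the cyclic convolution (product in `𝔽_p[X]/(X^S - 1)`) of
`Σ_j η^{j²} a_j X^j` and `Σ_j η^{-j²} X^j`. -/
theorem bluestein (p : ℕ) (hp : p.Prime) (hodd : Odd p) (s S : ℕ) (hS : S = 2 ^ s)
    (hdvd : 2 * S ∣ p - 1) (η : (ZMod p)ˣ) (hη : orderOf η = 2 * S)
    (a : Fin S → ZMod p) (i : Fin S) :
    (∑ j : Fin S, a j * ((η : ZMod p) ^ 2) ^ (i.val * j.val)) =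
      (η : ZMod p) ^ (i.val ^ 2) *
        ∑ j₁ : Fin S, ∑ j₂ : Fin S,
          if (j₁.val + j₂.val) % S = i.val then
            ((η : ZMod p) ^ (j₁.val ^ 2) * a j₁) * ((η ^ (-(j₂.val ^ 2 : ℤ)) : (ZMod p)ˣ) : ZMod p)
          else 0 := by
  have hS0 : 0 < S := hS ▸ pow_pos two_pos s
  haveI : NeZero S := ⟨hS0.ne'⟩
  rcases Nat.eq_zero_or_pos s with hs0 | hs1
  · subst hs0
    simp only [pow_zero] at hS
    subst hS
    simp [Subsingleton.elim i 0, Subsingleton.elim (default : Fin 1) 0]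
  have hS2 : 2 ∣ S := hS ▸ dvd_pow_self 2 hs1.ne'
  rw [Finset.mul_sum]
  refine Finset.sum_congr rfl fun j _ => ?_
  -- collapse inner sum
  have hcond : ∀ j₂ : Fin S, ((j.val + j₂.val) % S = i.val) ↔ j₂ = i - j := by
    intro j₂
    rw [← Fin.val_add, Fin.val_eq_val, eq_comm, eq_sub_iff_add_eq, add_comm]
    exact eq_comm
  simp only [hcond, Finset.sum_ite_eq', Finset.mem_univ, if_true]
  -- now termwise identity; k = (i - j).val
  set k : ℕ := (i - j).val with hk
  -- S ∣ (i - j) - k  in ℤ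
  have hkval : k = (i.val + (S - j.val)) % S := by
    rw [hk, Fin.sub_def]
    simp [Nat.add_comm]
  have hdvd1 : (S:ℤ) ∣ ((i.val : ℤ) - j.val) - (k : ℤ) := by
    have hjle : j.val ≤ S := j.isLt.le
    have hm : ((i.val + (S - j.val) : ℕ) : ℤ) % S = (k : ℤ) := by
      rw [hkval]; push_cast; ring
    set m : ℤ := ((i.val + (S - j.val) : ℕ) : ℤ) with hmdef
    have h1 : (S:ℤ) ∣ m - (k:ℤ) := ⟨m / S, by rw [← hm, Int.emod_def]; ring⟩
    have h2 : ((i.val : ℤ) - j.val) - (k : ℤ) = (m - (k:ℤ)) - S := by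
      rw [hmdef]; push_cast [Nat.cast_sub hjle]; ring
    rw [h2]
    exact dvd_sub h1 dvd_rfl
  have key : (2*(S:ℤ)) ∣ ((i.val:ℤ) - j.val)^2 - (k : ℤ)^2 :=
    blu_key S hS2 _ _ hdvd1
  -- units equality
  have hu : η ^ ((2 * (i.val * j.val) : ℕ) : ℤ) =
      η ^ ((i.val^2 + j.val^2 : ℕ) : ℤ) * η ^ (-((k:ℤ)^2)) := by
    rw [← zpow_add]
    have hd : ((orderOf η : ℤ)) ∣ (((i.val^2 + j.val^2 : ℕ) : ℤ) + -((k:ℤ)^2)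
        - ((2 * (i.val * j.val) : ℕ) : ℤ)) := by
      rw [hη]
      push_cast
      have : ((i.val:ℤ)^2 + (j.val:ℤ)^2 + -((k:ℤ)^2) - 2 * ((i.val:ℤ) * j.val))
          = ((i.val:ℤ) - j.val)^2 - (k:ℤ)^2 := by ring
      rw [this]
      exact_mod_cast key
    have h1 : η ^ ((((i.val^2 + j.val^2 : ℕ) : ℤ) + -((k:ℤ)^2))
        - ((2 * (i.val * j.val) : ℕ) : ℤ)) = 1 :=
      orderOf_dvd_iff_zpow_eq_one.mp hd
    rw [zpow_sub] at h1
    rw [eq_comm, ← mul_inv_eq_one]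
    exact h1
  -- convert goal to units
  have hcast : ((η : ZMod p) ^ 2) ^ (i.val * j.val) = ((η : ZMod p)) ^ (2 * (i.val * j.val)) := by
    rw [← pow_mul]
  rw [hcast]
  have h2 : ((η : ZMod p)) ^ (2 * (i.val * j.val))
      = ((η ^ (2 * (i.val * j.val)) : (ZMod p)ˣ) : ZMod p) := by
    push_cast; ring
  have h3 : (η : ZMod p) ^ (i.val ^ 2) * ((η : ZMod p) ^ (j.val ^ 2))
      = ((η ^ (i.val^2 + j.val^2) : (ZMod p)ˣ) : ZMod p) := by
    push_cast [pow_add]; ring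
  have h4 : (η ^ (2 * (i.val * j.val)) : (ZMod p)ˣ)
      = (η ^ (i.val^2 + j.val^2) : (ZMod p)ˣ) * η ^ (-((k:ℤ)^2)) := by
    have := hu
    rwa [zpow_natCast, zpow_natCast] at this
  calc a j * ((η : ZMod p)) ^ (2 * (i.val * j.val))
      = a j * ((η ^ (2 * (i.val * j.val)) : (ZMod p)ˣ) : ZMod p) := by rw [h2]
    _ = a j * (((η ^ (i.val^2 + j.val^2) : (ZMod p)ˣ) : ZMod p)
          * ((η ^ (-((k:ℤ)^2)) : (ZMod p)ˣ) : ZMod p)) := by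
          rw [h4]; push_cast; ring
    _ = (η : ZMod p) ^ (i.val ^ 2) * (((η : ZMod p)) ^ (j.val ^ 2) * a j
          * ((η ^ (-((k:ℤ)^2)) : (ZMod p)ˣ) : ZMod p)) := by
          rw [← mul_assoc, ← mul_assoc]
          congr 1
          rw [← h3]
          ring
  done
end

section
/- Define lg x = ⌈log₂ x⌉. Let β ≥ 16 be a real number and set k' = ⌈β / (lg β − 3·lg lg β)³⌉ (assuming lg β − 3·lg lg β > 0) and m' = k'·(lg k')³. Then m' ≥ β. -/
/-- `lg x = ⌈log₂ x⌉` as an integer, for real `x`. -/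
noncomputable def lg (x : ℝ) : ℤ := ⌈Real.logb 2 x⌉

/-- Let `β ≥ 16`, and (assuming `lg β - 3·lg lg β > 0`) set
`k' = ⌈β / (lg β - 3·lg lg β)³⌉` and `m' = k'·(lg k')³`.  Then `m' ≥ β`. -/
theorem mprime_ge_beta (β : ℝ) (hβ : 16 ≤ β)
    (hpos : 0 < (lg β : ℝ) - 3 * (lg (lg β : ℝ) : ℝ))
    (k' : ℤ) (hk' : k' = ⌈β / ((lg β : ℝ) - 3 * (lg (lg β : ℝ) : ℝ)) ^ 3⌉)
    (m' : ℤ) (hm' : m' = k' * (lg (k' : ℝ)) ^ 3) :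
    β ≤ (m' : ℝ) := by
  have hβ0 : (0:ℝ) < β := by linarith
  set A : ℤ := lg β with hA
  set B : ℤ := lg (A : ℝ) with hB
  -- logb 2 β ≥ 4
  have h16 : Real.logb 2 (16:ℝ) = 4 := by
    rw [show (16:ℝ) = 2 ^ (4:ℕ) by norm_num, Real.logb_pow]
    simp
  have hlogβ : (4:ℝ) ≤ Real.logb 2 β := by
    rw [← h16]
    exact Real.logb_le_logb_of_le (by norm_num) (by norm_num) hβ
  have hA4 : (4:ℤ) ≤ A := by
    have : (4:ℝ) ≤ (A:ℝ) := le_trans hlogβ (Int.le_ceil _)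
    exact_mod_cast this
  have hB0 : (0:ℤ) ≤ B := by
    have h1 : (0:ℝ) ≤ Real.logb 2 (A:ℝ) :=
      Real.logb_nonneg (by norm_num) (by exact_mod_cast (by linarith : (1:ℤ) ≤ A))
    have : (0:ℝ) ≤ (B:ℝ) := le_trans h1 (Int.le_ceil _)
    exact_mod_cast this
  set d : ℤ := A - 3 * B with hdd
  have hd0 : 0 < d := by
    rw [hdd]
    exact_mod_cast hpos
  have hdA : d ≤ A := by omega
  have hdR : (0:ℝ) < (d:ℝ) := by exact_mod_cast hd0
  have hd3 : (0:ℝ) < (d:ℝ)^3 := by positivity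
  have hcast : (A : ℝ) - 3 * (B : ℝ) = (d:ℝ) := by rw [hdd]; push_cast; ring
  have hk'ge : β / (d:ℝ)^3 ≤ (k':ℝ) := by
    rw [hk', hcast]; exact Int.le_ceil _
  have hk'pos : (0:ℝ) < (k':ℝ) := lt_of_lt_of_le (by positivity) hk'ge
  -- k' ≥ β / A^3
  have hAR : (0:ℝ) < (A:ℝ) := lt_of_lt_of_le hdR (by exact_mod_cast hdA)
  have hdivle : β / (A:ℝ)^3 ≤ β / (d:ℝ)^3 := by
    gcongr
  have hk'ge2 : β / (A:ℝ)^3 ≤ (k':ℝ) := le_trans hdivle hk'ge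
  have hquotpos : (0:ℝ) < β / (A:ℝ)^3 := by positivity
  have hlogk' : Real.logb 2 β - 3 * Real.logb 2 (A:ℝ) ≤ Real.logb 2 (k':ℝ) := by
    have h1 : Real.logb 2 (β / (A:ℝ)^3) ≤ Real.logb 2 (k':ℝ) :=
      Real.logb_le_logb_of_le (by norm_num) hquotpos hk'ge2
    have h2 : Real.logb 2 (β / (A:ℝ)^3)
        = Real.logb 2 β - 3 * Real.logb 2 (A:ℝ) := by
      rw [Real.logb_div (ne_of_gt hβ0) (by positivity), Real.logb_pow]
      push_cast; ring
    rw [h2] at h1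
    exact h1
  have hlogAB : Real.logb 2 (A:ℝ) ≤ (B:ℝ) := Int.le_ceil _
  have hlogk'2 : Real.logb 2 β - ((3*B : ℤ) : ℝ) ≤ Real.logb 2 (k':ℝ) := by
    push_cast; linarith
  have hElg : d ≤ lg (k':ℝ) := by
    have h3 : ⌈Real.logb 2 β - ((3*B:ℤ):ℝ)⌉ ≤ ⌈Real.logb 2 (k':ℝ)⌉ :=
      Int.ceil_le_ceil hlogk'2
    rw [Int.ceil_sub_intCast] at h3
    calc d = A - 3*B := hdd
    _ ≤ ⌈Real.logb 2 (k':ℝ)⌉ := h3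
    _ = lg (k':ℝ) := rfl
  set E : ℤ := lg (k':ℝ) with hE
  have hEd : (d:ℝ)^3 ≤ (E:ℝ)^3 := by
    have hde : (d:ℝ) ≤ (E:ℝ) := by exact_mod_cast hElg
    gcongr
  have hstep : β ≤ (k':ℝ) * (d:ℝ)^3 := by
    rwa [div_le_iff₀ hd3] at hk'ge
  have hstep2 : (k':ℝ) * (d:ℝ)^3 ≤ (k':ℝ) * (E:ℝ)^3 :=
    mul_le_mul_of_nonneg_left hEd (le_of_lt hk'pos)
  have hfin : ((m':ℤ):ℝ) = (k':ℝ) * (E:ℝ)^3 := by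
    rw [hm']; push_cast; ring
  linarith [hstep, hstep2, hfin.le, hfin.ge]
end

section
/- Suppose T : ℕ → ℝ≥0, B > 0, m₀ ∈ ℕ, and suppose: (a) T(m) ≤ B for all m ≤ m₀; (b) for each m > m₀ there exists m' with log*((m')^{1/8}) ≤ log*(m^{1/8}) − 1 such that T(m) < (4 + 4^{−log*(m^{1/8})})·T(m') + B. Then T(m) < (4^{log*(m^{1/8})+1} − 1)·B for all m ≥ 2. -/
/-- The iterated logarithm: `log* x = min {j : ℕ | log^[j] x ≤ 1}`. -/
noncomputable def logStar (x : ℝ) : ℕ := sInf {j : ℕ | Real.log^[j] x ≤ 1}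

/-- Suppose `T : ℕ → ℝ≥0`, `B > 0`, `m₀ ∈ ℕ` satisfy:
(a) `T m ≤ B` for all `m ≤ m₀`;
(b) for each `m > m₀` there exists `m'` with `log*((m')^{1/8}) ≤ log*(m^{1/8}) - 1`
    and `T m < (4 + 4^{-log*(m^{1/8})})·T m' + B`.
Then `T m < (4^{log*(m^{1/8}) + 1} - 1)·B` for all `m ≥ 2`. -/
theorem recursion_bound (T : ℕ → ℝ) (hT : ∀ m, 0 ≤ T m) (B : ℝ) (hB : 0 < B) (m₀ : ℕ)
    (base : ∀ m ≤ m₀, T m ≤ B)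
    (step : ∀ m, m₀ < m → ∃ m' : ℕ,
      logStar ((m' : ℝ) ^ ((1 : ℝ) / 8)) + 1 ≤ logStar ((m : ℝ) ^ ((1 : ℝ) / 8)) ∧
      T m < (4 + (4 : ℝ) ^ (-(logStar ((m : ℝ) ^ ((1 : ℝ) / 8)) : ℤ))) * T m' + B) :
    ∀ m : ℕ, 2 ≤ m →
      T m < ((4 : ℝ) ^ (logStar ((m : ℝ) ^ ((1 : ℝ) / 8)) + 1) - 1) * B := by
  have basecase : ∀ m ≤ m₀, T m < ((4 : ℝ) ^ (logStar ((m : ℝ) ^ ((1 : ℝ) / 8)) + 1) - 1) * B := by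
    intro m hm
    have h1 : (4 : ℝ) ^ 1 ≤ (4 : ℝ) ^ (logStar ((m : ℝ) ^ ((1 : ℝ) / 8)) + 1) :=
      pow_le_pow_right₀ (by norm_num) (by omega)
    have := base m hm
    nlinarith
  suffices h : ∀ s : ℕ, ∀ m : ℕ, logStar ((m : ℝ) ^ ((1 : ℝ) / 8)) ≤ s →
      T m < ((4 : ℝ) ^ (logStar ((m : ℝ) ^ ((1 : ℝ) / 8)) + 1) - 1) * B by
    intro m _
    exact h _ m le_rfl
  intro s
  induction s with
  | zero =>
    intro m hm
    by_cases hm0 : m ≤ m₀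
    · exact basecase m hm0
    · obtain ⟨m', h1, _⟩ := step m (lt_of_not_ge hm0)
      omega
  | succ s ih =>
    intro m hm
    by_cases hm0 : m ≤ m₀
    · exact basecase m hm0
    · obtain ⟨m', h1, h2⟩ := step m (lt_of_not_ge hm0)
      set sm := logStar ((m : ℝ) ^ ((1 : ℝ) / 8)) with hsm
      have hs' : logStar ((m' : ℝ) ^ ((1 : ℝ) / 8)) ≤ s := by omega
      have ihm' := ih m' hs'
      have hmono : (4 : ℝ) ^ (logStar ((m' : ℝ) ^ ((1 : ℝ) / 8)) + 1) ≤ (4 : ℝ) ^ sm :=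
        pow_le_pow_right₀ (by norm_num) h1
      have hTm' : T m' < ((4 : ℝ) ^ sm - 1) * B := by nlinarith
      have hc : (4 : ℝ) ^ (-(sm : ℤ)) * (4 : ℝ) ^ sm = 1 := by
        rw [← zpow_natCast (4 : ℝ) sm, ← zpow_add₀ (by norm_num : (4:ℝ) ≠ 0)]
        simp
      have hcpos : (0 : ℝ) < (4 : ℝ) ^ (-(sm : ℤ)) := by positivity
      have hpows : ((4 : ℝ)) ^ (sm + 1) = 4 * (4 : ℝ) ^ sm := by ring
      have hT' := hT m'
      nlinarith [mul_pos hcpos hB]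
end
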